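/- arXiv:1908.04665 — 3 statements merged into one kernel-verified Lean document; each statement's English description precedes it below -/
import Mathlib

section
/- If F is in the Hardy space H^2 of the unit disc and F(α)=0 for some α with |α|<1, then the function H_α(z)=F(z)/(z-α) (with its removable singularity at α filled in) belongs to H^2, and ‖H_α‖_{H^2} ≤ (2/(1-|α|)) ‖F‖_{H^2}. -/
open Filter Finset

/-- Square of the `H²` norm in terms of Taylor coefficients. -/
noncomputable def h2norm2 (a : ℕ → ℂ) : ℝ := ∑' n, ‖a n‖ ^ 2

/-- `a` is the sequence of Taylor coefficients of `F` on the open unit disc. -/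
def IsCoeffs (a : ℕ → ℂ) (F : ℂ → ℂ) : Prop :=
  ∀ z : ℂ, ‖z‖ < 1 → HasSum (fun n => a n * z ^ n) (F z)

lemma my_hasFPS {c : ℕ → ℂ} {f : ℂ → ℂ}
    (hc : ∀ z : ℂ, ‖z‖ < 1 → HasSum (fun n => c n * z ^ n) (f z)) :
    HasFPowerSeriesOnBall f (FormalMultilinearSeries.ofScalars ℂ c) 0 1 := by
  constructor
  · apply ENNReal.le_of_forall_nnreal_lt
    intro r hr
    have hr1 : (r : ℝ) < 1 := by exact_mod_cast hr
    have hz : ‖((r : ℝ) : ℂ)‖ < 1 := by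
      simpa [abs_of_nonneg r.2] using hr1
    have hsum := (hc _ hz).summable
    have ht0 : Filter.Tendsto (fun n => c n * ((r : ℝ) : ℂ) ^ n) atTop (nhds 0) :=
      hsum.tendsto_atTop_zero
    apply FormalMultilinearSeries.le_radius_of_tendsto _ (l := 0)
    have heq : (fun n => ‖FormalMultilinearSeries.ofScalars ℂ c n‖ * (r : ℝ) ^ n)
        = fun n => ‖c n * ((r : ℝ) : ℂ) ^ n‖ := by
      funext n
      rw [FormalMultilinearSeries.ofScalars_norm, norm_mul, norm_pow]
      simp [abs_of_nonneg r.2]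
    rw [heq]
    exact tendsto_zero_iff_norm_tendsto_zero.mp ht0
  · exact one_pos
  · intro y hy
    rw [EMetric.mem_ball, edist_zero_right] at hy
    have hy' : ‖y‖ < 1 := by
      rwa [← ofReal_norm, ENNReal.ofReal_lt_one] at hy
    have heq2 : (fun n => FormalMultilinearSeries.ofScalars ℂ c n fun _ => y)
        = fun n => c n * y ^ n := by
      funext n
      rw [FormalMultilinearSeries.ofScalars_apply_eq, smul_eq_mul]
    rw [zero_add, heq2]
    exact hc y hy'

lemma coeffs_unique {c c' : ℕ → ℂ} {f : ℂ → ℂ}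
    (hc : ∀ z : ℂ, ‖z‖ < 1 → HasSum (fun n => c n * z ^ n) (f z))
    (hc' : ∀ z : ℂ, ‖z‖ < 1 → HasSum (fun n => c' n * z ^ n) (f z)) : c = c' :=
  FormalMultilinearSeries.ofScalars_series_injective ℂ ℂ
    ((my_hasFPS hc).hasFPowerSeriesAt.eq_formalMultilinearSeries
      (my_hasFPS hc').hasFPowerSeriesAt)

set_option maxHeartbeats 2000000 in
/-- If `F ∈ H²` vanishes at `α ∈ 𝔻`, then `H(z) = F(z)/(z-α)` (singularity removed)
belongs to `H²` and `‖H‖ ≤ 2/(1-|α|) ‖F‖`. -/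
theorem stmt0 (F H : ℂ → ℂ) (a b : ℕ → ℂ) (α : ℂ) (hα : ‖α‖ < 1)
    (ha : IsCoeffs a F) (hb : IsCoeffs b H)
    (hF2 : Summable fun n => ‖a n‖ ^ 2)
    (hroot : F α = 0)
    (hfac : ∀ z : ℂ, ‖z‖ < 1 → F z = (z - α) * H z) :
    (Summable fun n => ‖b n‖ ^ 2) ∧
      Real.sqrt (h2norm2 b) ≤ 2 / (1 - ‖α‖) * Real.sqrt (h2norm2 a) := by
  classical
  set t : ℝ := ‖α‖ with ht_def
  have ht0 : 0 ≤ t := norm_nonneg α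
  have h1t : 0 < 1 - t := by linarith
  -- the shifted coefficient sequence
  set c' : ℕ → ℂ := fun n => match n with
    | 0 => -α * b 0
    | (k+1) => b k - α * b (k+1) with hc'def
  -- c' are coefficients of F
  have hc' : ∀ z : ℂ, ‖z‖ < 1 → HasSum (fun n => c' n * z ^ n) (F z) := by
    intro z hz
    have h1 := hb z hz
    have h2 : HasSum (fun n => b n * z ^ (n + 1)) (z * H z) := by
      have hfun : (fun n => b n * z ^ (n + 1)) = fun n => z * (b n * z ^ n) := by
        funext n; ring
      rw [hfun]; exact h1.mul_left z
    -- e n with e 0 = 0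
    set e : ℕ → ℂ := fun n => match n with
      | 0 => 0
      | (k+1) => b k * z ^ (k+1) with he_def
    have h3 : HasSum e (z * H z + ∑ i ∈ Finset.range 1, e i) :=
      (hasSum_nat_add_iff (f := e) 1).mp h2
    have h4 := h3.sub (h1.mul_left α)
    have hfun2 : (fun n => e n - α * (b n * z ^ n)) = fun n => c' n * z ^ n := by
      funext n
      cases n with
      | zero => simp only [he_def, hc'def]; ring
      | succ k => simp only [he_def, hc'def]; ring
    rw [hfun2] at h4
    have hsum_eq : z * H z + ∑ i ∈ Finset.range 1, e i - α * H z = F z := by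
      simp [he_def, hfac z hz]; ring
    rwa [hsum_eq] at h4
  have hac : a = c' := coeffs_unique ha hc'
  have haS : ∀ n, b n = a (n + 1) + α * b (n + 1) := by
    intro n
    have := congrFun hac (n + 1)
    simp only [hc'def] at this
    rw [this]; ring
  -- telescoping
  have tel : ∀ n k, b n = (∑ j ∈ Finset.range k, α ^ j * a (n + 1 + j)) + α ^ k * b (n + k) := by
    intro n k
    induction k with
    | zero => simp
    | succ k ih =>
      have e1 : n + 1 + k = n + k + 1 := by omega
      have e2 : n + (k + 1) = n + k + 1 := by omega
      rw [Finset.sum_range_succ, e1, e2, ih, haS (n + k)]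
      ring
  -- vanishing of the remainder
  set r : ℝ := (1 + t) / 2 with hr_def
  have hrt : t < r := by rw [hr_def]; linarith
  have hr1 : r < 1 := by rw [hr_def]; linarith
  have hr0 : 0 < r := by linarith
  have hbr : Filter.Tendsto (fun m => ‖b m‖ * r ^ m) atTop (nhds 0) := by
    have hz : ‖((r : ℝ) : ℂ)‖ < 1 := by simpa [abs_of_nonneg hr0.le] using hr1
    have := (hb _ hz).summable.tendsto_atTop_zero
    have h := tendsto_zero_iff_norm_tendsto_zero.mp this
    have heq : (fun n => ‖b n * ((r : ℝ) : ℂ) ^ n‖) = fun n => ‖b n‖ * r ^ n := by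
      funext n
      rw [norm_mul, norm_pow]
      simp [abs_of_nonneg hr0.le]
    rwa [heq] at h
  obtain ⟨C, hC⟩ : ∃ C : ℝ, ∀ m, ‖b m‖ * r ^ m ≤ C := by
    obtain ⟨C, hC⟩ := hbr.bddAbove_range
    exact ⟨C, fun m => hC (Set.mem_range_self m)⟩
  have hvan : ∀ n, Filter.Tendsto (fun k => t ^ k * ‖b (n + k)‖) atTop (nhds 0) := by
    intro n
    apply squeeze_zero (fun k => by positivity) (g := fun k => (C / r ^ n) * (t / r) ^ k)
    · intro k
      have h1 : ‖b (n + k)‖ ≤ C / r ^ (n + k) := by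
        rw [le_div_iff₀ (by positivity)]
        exact hC (n + k)
      calc t ^ k * ‖b (n + k)‖ ≤ t ^ k * (C / r ^ (n + k)) := by
            exact mul_le_mul_of_nonneg_left h1 (by positivity)
        _ = (C / r ^ n) * (t / r) ^ k := by
            rw [pow_add, div_pow]
            field_simp
            rw [div_pow t r k, mul_assoc, mul_div_assoc', mul_div_cancel_left₀ _ (by positivity)]
            ring
    · have : Filter.Tendsto (fun k : ℕ => (t / r) ^ k) atTop (nhds 0) := by
        apply tendsto_pow_atTop_nhds_zero_of_lt_one (by positivity)
        rw [div_lt_one hr0]; exact hrt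
      have h := this.const_mul (C / r ^ n)
      simpa using h
  -- summability facts about a
  set A : ℝ := ∑' n, ‖a n‖ ^ 2 with hA_def
  have hA0 : 0 ≤ A := tsum_nonneg fun n => by positivity
  have haM : ∀ m, ‖a m‖ ≤ Real.sqrt A := by
    intro m
    have h1 : ‖a m‖ ^ 2 ≤ A := Summable.le_tsum hF2 m fun n _ => by positivity
    have := Real.sqrt_le_sqrt h1
    rwa [Real.sqrt_sq (norm_nonneg _)] at this
  have hgeo : Summable fun j : ℕ => t ^ j := summable_geometric_of_lt_one ht0 hα
  have hTsummable : ∀ n, Summable fun j => t ^ j * ‖a (n + 1 + j)‖ := by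
    intro n
    apply Summable.of_nonneg_of_le (fun j => by positivity)
      (fun j => mul_le_mul_of_nonneg_left (haM _) (by positivity))
    exact hgeo.mul_right _
  have hSsummable : ∀ n, Summable fun j => t ^ j * ‖a (n + 1 + j)‖ ^ 2 := by
    intro n
    apply Summable.of_nonneg_of_le (fun j => by positivity)
      (fun j => mul_le_mul_of_nonneg_left (Summable.le_tsum hF2 _ fun m _ => by positivity) (by positivity))
    exact hgeo.mul_right _
  set T : ℕ → ℝ := fun n => ∑' j, t ^ j * ‖a (n + 1 + j)‖ with hT_def
  set S : ℕ → ℝ := fun n => ∑' j, t ^ j * ‖a (n + 1 + j)‖ ^ 2 with hS_def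
  -- pointwise bound on b
  have hbT : ∀ n, ‖b n‖ ≤ T n := by
    intro n
    have hk : ∀ k, ‖b n‖ ≤ (∑ j ∈ Finset.range k, t ^ j * ‖a (n + 1 + j)‖)
        + t ^ k * ‖b (n + k)‖ := by
      intro k
      calc ‖b n‖ = ‖(∑ j ∈ Finset.range k, α ^ j * a (n + 1 + j)) + α ^ k * b (n + k)‖ := by
            rw [← tel n k]
        _ ≤ ‖∑ j ∈ Finset.range k, α ^ j * a (n + 1 + j)‖ + ‖α ^ k * b (n + k)‖ :=
            norm_add_le _ _
        _ ≤ (∑ j ∈ Finset.range k, t ^ j * ‖a (n + 1 + j)‖) + t ^ k * ‖b (n + k)‖ := by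
            gcongr
            · calc ‖∑ j ∈ Finset.range k, α ^ j * a (n + 1 + j)‖
                  ≤ ∑ j ∈ Finset.range k, ‖α ^ j * a (n + 1 + j)‖ := norm_sum_le _ _
                _ = ∑ j ∈ Finset.range k, t ^ j * ‖a (n + 1 + j)‖ := by
                    apply Finset.sum_congr rfl
                    intro j _
                    rw [norm_mul, norm_pow]
            · rw [norm_mul, norm_pow]
    have hlim : Filter.Tendsto (fun k => (∑ j ∈ Finset.range k, t ^ j * ‖a (n + 1 + j)‖)
        + t ^ k * ‖b (n + k)‖) atTop (nhds (T n + 0)) :=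
      ((hTsummable n).hasSum.tendsto_sum_nat).add (hvan n)
    rw [add_zero] at hlim
    exact ge_of_tendsto hlim (Filter.Eventually.of_forall hk)
  -- Cauchy-Schwarz: T n ^ 2 ≤ (1-t)⁻¹ * S n
  have hTS : ∀ n, T n ^ 2 ≤ (1 - t)⁻¹ * S n := by
    intro n
    have hfin : ∀ k, (∑ j ∈ Finset.range k, t ^ j * ‖a (n + 1 + j)‖) ^ 2
        ≤ (1 - t)⁻¹ * S n := by
      intro k
      have hcs := Finset.sum_mul_sq_le_sq_mul_sq (Finset.range k)
        (fun j => Real.sqrt (t ^ j)) (fun j => Real.sqrt (t ^ j) * ‖a (n + 1 + j)‖)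
      have h1 : ∀ j, Real.sqrt (t ^ j) * (Real.sqrt (t ^ j) * ‖a (n + 1 + j)‖)
          = t ^ j * ‖a (n + 1 + j)‖ := by
        intro j
        rw [← mul_assoc, Real.mul_self_sqrt (by positivity)]
      have h2 : ∀ j, Real.sqrt (t ^ j) ^ 2 = t ^ j := fun j => Real.sq_sqrt (by positivity)
      have h3 : ∀ j, (Real.sqrt (t ^ j) * ‖a (n + 1 + j)‖) ^ 2
          = t ^ j * ‖a (n + 1 + j)‖ ^ 2 := by
        intro j
        rw [mul_pow, h2]
      simp only [h1, h2, h3] at hcs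
      calc (∑ j ∈ Finset.range k, t ^ j * ‖a (n + 1 + j)‖) ^ 2
          ≤ (∑ j ∈ Finset.range k, t ^ j) * ∑ j ∈ Finset.range k, t ^ j * ‖a (n + 1 + j)‖ ^ 2 :=
            hcs
        _ ≤ (1 - t)⁻¹ * S n := by
            apply mul_le_mul
            · have := Summable.sum_le_tsum (Finset.range k) (fun j _ => by positivity) hgeo
              rwa [tsum_geometric_of_lt_one ht0 hα] at this
            · exact Summable.sum_le_tsum (Finset.range k) (fun j _ => by positivity) (hSsummable n)
            · positivity
            · positivity
    have hlim : Filter.Tendsto (fun k => (∑ j ∈ Finset.range k, t ^ j * ‖a (n + 1 + j)‖) ^ 2)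
        atTop (nhds (T n ^ 2)) :=
      ((hTsummable n).hasSum.tendsto_sum_nat).pow 2
    exact le_of_tendsto hlim (Filter.Eventually.of_forall hfin)
  have hb2 : ∀ n, ‖b n‖ ^ 2 ≤ (1 - t)⁻¹ * S n := by
    intro n
    refine le_trans ?_ (hTS n)
    have hT0 : 0 ≤ T n := tsum_nonneg fun j => by positivity
    exact pow_le_pow_left₀ (norm_nonneg _) (hbT n) 2
  -- double sum machinery
  set P : ℕ × ℕ → ℝ := fun p => t ^ p.2 * ‖a (p.1 + 1 + p.2)‖ ^ 2 with hP_def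
  have hP0 : ∀ p, 0 ≤ P p := fun p => by positivity
  have hcol : ∀ j, (fun n => P (n, j)) = fun n => t ^ j * ‖a (n + (j + 1))‖ ^ 2 := by
    intro j
    funext n
    have e : n + 1 + j = n + (j + 1) := by omega
    simp only [hP_def, e]
  have hcolsum : ∀ j, Summable fun n => P (n, j) := by
    intro j
    rw [hcol j]
    exact ((summable_nat_add_iff (j + 1)).mpr hF2).mul_left _
  have hcolbound : ∀ j, ∑' n, P (n, j) ≤ A * t ^ j := by
    intro j
    rw [hcol j, tsum_mul_left]
    have htail : ∑' n, ‖a (n + (j + 1))‖ ^ 2 ≤ A := by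
      have hadd := Summable.sum_add_tsum_nat_add (f := fun n => ‖a n‖ ^ 2) (j + 1) hF2
      have hpos : 0 ≤ ∑ i ∈ Finset.range (j + 1), ‖a i‖ ^ 2 :=
        Finset.sum_nonneg fun i _ => by positivity
      rw [hA_def]; linarith
    calc t ^ j * ∑' n, ‖a (n + (j + 1))‖ ^ 2 ≤ t ^ j * A :=
          mul_le_mul_of_nonneg_left htail (by positivity)
      _ = A * t ^ j := by ring
  have hPswap : Summable fun p : ℕ × ℕ => P p.swap := by
    rw [summable_prod_of_nonneg (fun p => hP0 p.swap)]
    refine ⟨fun j => hcolsum j, ?_⟩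
    exact Summable.of_nonneg_of_le (fun j => tsum_nonneg fun n => hP0 _)
      (fun j => hcolbound j) (hgeo.mul_left A)
  have hP : Summable P := by
    have h := hPswap.prod_symm
    have : (fun p : ℕ × ℕ => P p.swap.swap) = P := by funext p; simp
    rwa [this] at h
  have hSsum : Summable S := ((summable_prod_of_nonneg hP0).mp hP).2
  -- total bound on ∑ S
  have hStot : ∑' n, S n ≤ (1 - t)⁻¹ * A := by
    have h1 : ∑' n, S n = ∑' p : ℕ × ℕ, P p := (Summable.tsum_prod hP).symm
    have h2 : ∑' p : ℕ × ℕ, P p = ∑' (j : ℕ), ∑' (n : ℕ), P (n, j) := by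
      rw [← (Equiv.prodComm ℕ ℕ).tsum_eq P]
      exact Summable.tsum_prod hPswap
    have h3 : ∑' (j : ℕ), ∑' (n : ℕ), P (n, j) ≤ ∑' j : ℕ, A * t ^ j := by
      apply Summable.tsum_le_tsum hcolbound _ (hgeo.mul_left A)
      exact ((summable_prod_of_nonneg (fun p => hP0 p.swap)).mp hPswap).2
    have h4 : ∑' j : ℕ, A * t ^ j = A * (1 - t)⁻¹ := by
      rw [tsum_mul_left, tsum_geometric_of_lt_one ht0 hα]
    rw [h1, h2]
    rw [h4] at h3
    linarith
  -- conclusion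
  have hb2sum : Summable fun n => ‖b n‖ ^ 2 :=
    Summable.of_nonneg_of_le (fun n => by positivity) hb2 (hSsum.mul_left _)
  refine ⟨hb2sum, ?_⟩
  have htot : h2norm2 b ≤ (1 - t)⁻¹ * ((1 - t)⁻¹ * A) := by
    have h1 : h2norm2 b ≤ ∑' n, (1 - t)⁻¹ * S n :=
      Summable.tsum_le_tsum hb2 hb2sum (hSsum.mul_left _)
    rw [tsum_mul_left] at h1
    have h2 : (1 - t)⁻¹ * ∑' n, S n ≤ (1 - t)⁻¹ * ((1 - t)⁻¹ * A) :=
      mul_le_mul_of_nonneg_left hStot (by positivity)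
    linarith
  have hsq : Real.sqrt (h2norm2 b) ≤ (1 - t)⁻¹ * Real.sqrt A := by
    have h1 := Real.sqrt_le_sqrt htot
    have h2 : Real.sqrt ((1 - t)⁻¹ * ((1 - t)⁻¹ * A)) = (1 - t)⁻¹ * Real.sqrt A := by
      rw [← mul_assoc, ← sq, Real.sqrt_mul (sq_nonneg _), Real.sqrt_sq (by positivity)]
    rw [h2] at h1
    exact h1
  have hAeq : Real.sqrt (h2norm2 a) = Real.sqrt A := by rw [h2norm2, hA_def]
  rw [hAeq]
  refine le_trans hsq ?_
  apply mul_le_mul_of_nonneg_right _ (Real.sqrt_nonneg A)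
  rw [inv_eq_one_div, div_le_div_iff₀ h1t h1t]
  nlinarith
end

section
/- Let (γ_n) be a monotone increasing sequence of nonnegative reals with γ_0=0. Suppose F ∈ X_γ has a root at α ∈ D, so F(z)=(z-α)H_α(z), and define φ_α(F)(z) = (1-ᾱz)H_α(z). Then φ_α(F) ∈ X_γ, H_α ∈ Y_γ, and ‖φ_α(F)‖_{X_γ}^2 = ‖F‖_{X_γ}^2 − (1−|α|^2)‖H_α‖_{Y_γ}^2. -/
/-- Square of the weighted `X_γ` norm in terms of Taylor coefficients. -/
noncomputable def xnorm2 (γ : ℕ → ℝ) (a : ℕ → ℂ) : ℝ := ∑' n, γ n * ‖a n‖ ^ 2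

/-- Square of the weighted `Y_γ` (semi-)norm in terms of Taylor coefficients. -/
noncomputable def ynorm2 (γ : ℕ → ℝ) (a : ℕ → ℂ) : ℝ :=
  ∑' n, (γ (n + 1) - γ n) * ‖a n‖ ^ 2


open Filter Finset Topology

lemma key_alg (α x y : ℂ) :
    ‖x - (starRingEnd ℂ) α * y‖ ^ 2 =
      ‖y - α * x‖ ^ 2 + (1 - ‖α‖ ^ 2) * (‖x‖ ^ 2 - ‖y‖ ^ 2) := by
  simp only [Complex.sq_norm, Complex.normSq_apply, Complex.sub_re,
    Complex.sub_im, Complex.mul_re, Complex.mul_im, Complex.conj_re, Complex.conj_im]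
  ring

-- main lemma: the weighted coefficients of a go to 0, with uniform bound
lemma coeff_tendsto (γ : ℕ → ℝ) (hmono : Monotone γ) (h0 : γ 0 = 0)
    (α : ℂ) (hα : ‖α‖ < 1) (a c : ℕ → ℂ)
    (hc : ∀ n, c (n + 1) = a n - α * a (n + 1))
    (ha2 : Summable fun n => ‖a n‖ ^ 2)
    (hX : Summable fun n => γ n * ‖c n‖ ^ 2) :
    Tendsto (fun n => γ n * ‖a n‖ ^ 2) atTop (𝓝 0) ∧
      ∀ n, γ n * ‖a n‖ ^ 2 ≤ (1 - ‖α‖)⁻¹ * ∑' m, γ m * ‖c m‖ ^ 2 := by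
  have hγ : ∀ n, 0 ≤ γ n := fun n => h0 ▸ hmono (Nat.zero_le n)
  set f : ℕ → ℝ := fun m => γ m * ‖c m‖ ^ 2 with hf
  have hf0 : ∀ m, 0 ≤ f m := fun m => mul_nonneg (hγ m) (sq_nonneg _)
  set Xc : ℝ := ∑' m, f m with hXc
  set G : ℝ := (1 - ‖α‖)⁻¹ with hG
  have hα0 : (0:ℝ) ≤ ‖α‖ := norm_nonneg _
  have hG0 : 0 ≤ G := inv_nonneg.2 (by linarith)
  -- tail sums
  set R : ℕ → ℝ := fun n => ∑' m, f (m + (n + 1)) with hR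
  have hfshift : ∀ n, Summable fun m => f (m + (n+1)) := fun n =>
    (summable_nat_add_iff (n+1)).2 hX
  have hRself : ∀ n, R n = Xc - ∑ i ∈ range (n+1), f i := by
    intro n
    have := Summable.sum_add_tsum_nat_add (n+1) hX
    simp only [hR]
    linarith [this]
  have hR0 : ∀ n, 0 ≤ R n := fun n => tsum_nonneg (fun m => hf0 _)
  have hRle : ∀ n, R n ≤ Xc := by
    intro n
    rw [hRself n]
    have : 0 ≤ ∑ i ∈ range (n+1), f i := Finset.sum_nonneg fun i _ => hf0 i
    linarith
  -- the iterated expansion bound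
  have haK : ∀ n K, ‖a n‖ ≤ (∑ k ∈ range K, ‖α‖ ^ k * ‖c (n+1+k)‖) + ‖α‖ ^ K * ‖a (n+K)‖ := by
    intro n K
    induction K with
    | zero => simp
    | succ K ih =>
      have hstep : ‖a (n+K)‖ ≤ ‖c (n+K+1)‖ + ‖α‖ * ‖a (n+K+1)‖ := by
        have : a (n+K) = c (n+K+1) + α * a (n+K+1) := by rw [hc (n+K)]; ring
        rw [this]
        calc ‖c (n+K+1) + α * a (n+K+1)‖ ≤ ‖c (n+K+1)‖ + ‖α * a (n+K+1)‖ := norm_add_le _ _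
          _ = ‖c (n+K+1)‖ + ‖α‖ * ‖a (n+K+1)‖ := by rw [norm_mul]
      rw [Finset.sum_range_succ]
      have h1 : ‖α‖ ^ K * ‖a (n+K)‖ ≤ ‖α‖ ^ K * (‖c (n+K+1)‖ + ‖α‖ * ‖a (n+K+1)‖) :=
        mul_le_mul_of_nonneg_left hstep (pow_nonneg hα0 K)
      have he1 : n + 1 + K = n + K + 1 := by ring
      have he2 : n + (K+1) = n + K + 1 := by ring
      rw [he1, he2]
      calc ‖a n‖ ≤ (∑ k ∈ range K, ‖α‖ ^ k * ‖c (n+1+k)‖) + ‖α‖ ^ K * ‖a (n+K)‖ := ih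
        _ ≤ (∑ k ∈ range K, ‖α‖ ^ k * ‖c (n+1+k)‖) +
            (‖α‖ ^ K * ‖c (n+K+1)‖ + ‖α‖ ^ (K+1) * ‖a (n+K+1)‖) := by
          rw [pow_succ]
          nlinarith [h1]
        _ = _ := by ring
  -- weighted Cauchy-Schwarz bound
  have hmain : ∀ n, γ n * ‖a n‖ ^ 2 ≤ G * R n := by
    intro n
    set s : ℕ → ℝ := fun m => Real.sqrt (γ m) with hs
    have hs0 : ∀ m, 0 ≤ s m := fun m => Real.sqrt_nonneg _
    have hsq : ∀ m, s m ^ 2 = γ m := fun m => Real.sq_sqrt (hγ m)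
    -- for every K
    have hKbd : ∀ K, s n * ‖a n‖ ≤ Real.sqrt (G * R n) + ‖α‖ ^ K * (s n * ‖a (n+K)‖) := by
      intro K
      have h1 : s n * ‖a n‖ ≤ (∑ k ∈ range K, ‖α‖ ^ k * (s (n+1+k) * ‖c (n+1+k)‖))
          + ‖α‖ ^ K * (s n * ‖a (n+K)‖) := by
        have := mul_le_mul_of_nonneg_left (haK n K) (hs0 n)
        calc s n * ‖a n‖ ≤ s n * ((∑ k ∈ range K, ‖α‖ ^ k * ‖c (n+1+k)‖) + ‖α‖ ^ K * ‖a (n+K)‖) := this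
          _ = (∑ k ∈ range K, ‖α‖ ^ k * (s n * ‖c (n+1+k)‖)) + ‖α‖ ^ K * (s n * ‖a (n+K)‖) := by
            rw [mul_add, Finset.mul_sum]
            rw [show s n * (‖α‖ ^ K * ‖a (n + K)‖) = ‖α‖ ^ K * (s n * ‖a (n + K)‖) by ring]
            congr 1
            exact Finset.sum_congr rfl fun k _ => by ring
          _ ≤ _ := by
            have hterm : ∀ k ∈ range K, ‖α‖ ^ k * (s n * ‖c (n+1+k)‖)
                ≤ ‖α‖ ^ k * (s (n+1+k) * ‖c (n+1+k)‖) := by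
              intro k _
              apply mul_le_mul_of_nonneg_left _ (pow_nonneg hα0 k)
              exact mul_le_mul_of_nonneg_right
                (Real.sqrt_le_sqrt (hmono (by omega))) (norm_nonneg _)
            exact add_le_add_left (Finset.sum_le_sum hterm) _
      -- Cauchy-Schwarz on the sum
      have hCS : (∑ k ∈ range K, ‖α‖ ^ k * (s (n+1+k) * ‖c (n+1+k)‖)) ≤ Real.sqrt (G * R n) := by
        have h2 : (∑ k ∈ range K, ‖α‖ ^ k * (s (n+1+k) * ‖c (n+1+k)‖)) ^ 2 ≤
            (∑ k ∈ range K, ‖α‖ ^ k) * (∑ k ∈ range K, ‖α‖ ^ k * (γ (n+1+k) * ‖c (n+1+k)‖ ^ 2)) := by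
          have := Finset.sum_mul_sq_le_sq_mul_sq (range K)
            (fun k => Real.sqrt (‖α‖ ^ k))
            (fun k => Real.sqrt (‖α‖ ^ k) * (s (n+1+k) * ‖c (n+1+k)‖))
          have he : ∀ k, Real.sqrt (‖α‖ ^ k) * (Real.sqrt (‖α‖ ^ k) * (s (n+1+k) * ‖c (n+1+k)‖))
              = ‖α‖ ^ k * (s (n+1+k) * ‖c (n+1+k)‖) := by
            intro k
            rw [← mul_assoc, Real.mul_self_sqrt (pow_nonneg hα0 k)]
          have he2 : ∀ k, Real.sqrt (‖α‖ ^ k) ^ 2 = ‖α‖ ^ k := fun k =>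
            Real.sq_sqrt (pow_nonneg hα0 k)
          have he3 : ∀ k, (Real.sqrt (‖α‖ ^ k) * (s (n+1+k) * ‖c (n+1+k)‖)) ^ 2
              = ‖α‖ ^ k * (γ (n+1+k) * ‖c (n+1+k)‖ ^ 2) := by
            intro k
            rw [mul_pow, mul_pow, he2, hsq]
          calc (∑ k ∈ range K, ‖α‖ ^ k * (s (n+1+k) * ‖c (n+1+k)‖)) ^ 2
              = (∑ k ∈ range K, Real.sqrt (‖α‖ ^ k) *
                  (Real.sqrt (‖α‖ ^ k) * (s (n+1+k) * ‖c (n+1+k)‖))) ^ 2 := by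
                congr 1; exact Finset.sum_congr rfl fun k _ => (he k).symm
            _ ≤ (∑ k ∈ range K, Real.sqrt (‖α‖ ^ k) ^ 2) *
                  (∑ k ∈ range K, (Real.sqrt (‖α‖ ^ k) * (s (n+1+k) * ‖c (n+1+k)‖)) ^ 2) := this
            _ = _ := by
                congr 1
                · exact Finset.sum_congr rfl fun k _ => he2 k
                · exact Finset.sum_congr rfl fun k _ => he3 k
        have hg : (∑ k ∈ range K, ‖α‖ ^ k) ≤ G := by
          rw [hG, ← tsum_geometric_of_lt_one hα0 hα]
          exact Summable.sum_le_tsum (range K) (fun k _ => pow_nonneg hα0 k)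
            (summable_geometric_of_lt_one hα0 hα)
        have hw : (∑ k ∈ range K, ‖α‖ ^ k * (γ (n+1+k) * ‖c (n+1+k)‖ ^ 2)) ≤ R n := by
          calc (∑ k ∈ range K, ‖α‖ ^ k * (γ (n+1+k) * ‖c (n+1+k)‖ ^ 2))
              ≤ ∑ k ∈ range K, γ (n+1+k) * ‖c (n+1+k)‖ ^ 2 := by
                apply Finset.sum_le_sum
                intro k _
                have h1 : ‖α‖ ^ k ≤ 1 := pow_le_one₀ hα0 hα.le
                nlinarith [mul_nonneg (hγ (n+1+k)) (sq_nonneg ‖c (n+1+k)‖)]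
            _ = ∑ k ∈ range K, f (k + (n+1)) := by
                apply Finset.sum_congr rfl; intro k _
                have he : n + 1 + k = k + (n+1) := by omega
                rw [he]
            _ ≤ R n := Summable.sum_le_tsum (range K) (fun k _ => hf0 _) (hfshift n)
        have hsum0 : 0 ≤ ∑ k ∈ range K, ‖α‖ ^ k * (s (n+1+k) * ‖c (n+1+k)‖) :=
          Finset.sum_nonneg fun k _ => mul_nonneg (pow_nonneg hα0 _)
            (mul_nonneg (hs0 _) (norm_nonneg _))
        have hAB : (∑ k ∈ range K, ‖α‖ ^ k * (s (n+1+k) * ‖c (n+1+k)‖)) ^ 2 ≤ G * R n := by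
          calc _ ≤ (∑ k ∈ range K, ‖α‖ ^ k) * (∑ k ∈ range K, ‖α‖ ^ k * (γ (n+1+k) * ‖c (n+1+k)‖ ^ 2)) := h2
            _ ≤ G * R n := by
              apply mul_le_mul hg hw (Finset.sum_nonneg fun k _ =>
                mul_nonneg (pow_nonneg hα0 _) (mul_nonneg (hγ _) (sq_nonneg _))) hG0
        calc (∑ k ∈ range K, ‖α‖ ^ k * (s (n+1+k) * ‖c (n+1+k)‖))
            = Real.sqrt ((∑ k ∈ range K, ‖α‖ ^ k * (s (n+1+k) * ‖c (n+1+k)‖)) ^ 2) :=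
              (Real.sqrt_sq hsum0).symm
          _ ≤ Real.sqrt (G * R n) := Real.sqrt_le_sqrt hAB
      linarith [h1, add_le_add_right hCS (‖α‖ ^ K * (s n * ‖a (n+K)‖))]
    -- take K → ∞
    have htail : Tendsto (fun K => ‖α‖ ^ K * (s n * ‖a (n+K)‖)) atTop (𝓝 0) := by
      have h1 : Tendsto (fun K : ℕ => (‖α‖:ℝ) ^ K) atTop (𝓝 0) :=
        tendsto_pow_atTop_nhds_zero_of_lt_one hα0 hα
      have h2 : Tendsto (fun m => ‖a m‖) atTop (𝓝 0) := by
        have := ha2.tendsto_atTop_zero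
        have h3 : Tendsto (fun m => Real.sqrt (‖a m‖ ^ 2)) atTop (𝓝 (Real.sqrt 0)) :=
          (Real.continuous_sqrt.tendsto 0).comp this
        simpa [Real.sqrt_sq (norm_nonneg _)] using h3
      have h4 : Tendsto (fun K => ‖a (n+K)‖) atTop (𝓝 0) := by
        have := h2.comp (tendsto_add_atTop_nat n)
        simpa [Function.comp_def, add_comm] using this
      have := h1.mul ((tendsto_const_nhds (x := s n)).mul h4)
      simpa using this
    have hlim : Tendsto (fun K => Real.sqrt (G * R n) + ‖α‖ ^ K * (s n * ‖a (n+K)‖)) atTop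
        (𝓝 (Real.sqrt (G * R n))) := by
      simpa using (tendsto_const_nhds (x := Real.sqrt (G * R n))).add htail
    have hfin : s n * ‖a n‖ ≤ Real.sqrt (G * R n) := ge_of_tendsto' hlim hKbd
    have : (s n * ‖a n‖) ^ 2 ≤ Real.sqrt (G * R n) ^ 2 :=
      pow_le_pow_left₀ (mul_nonneg (hs0 n) (norm_nonneg _)) hfin 2
    rw [mul_pow, hsq, Real.sq_sqrt (mul_nonneg hG0 (hR0 n))] at this
    exact this
  constructor
  · -- tendsto
    have hRt : Tendsto R atTop (𝓝 0) := by
      have hps : Tendsto (fun n => ∑ i ∈ range (n+1), f i) atTop (𝓝 Xc) :=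
        hX.hasSum.tendsto_sum_nat.comp (tendsto_add_atTop_nat 1)
      have : Tendsto (fun n => Xc - ∑ i ∈ range (n+1), f i) atTop (𝓝 (Xc - Xc)) :=
        tendsto_const_nhds.sub hps
      simp only [sub_self] at this
      exact this.congr fun n => (hRself n).symm
    have : Tendsto (fun n => G * R n) atTop (𝓝 (G * 0)) := hRt.const_mul G
    rw [mul_zero] at this
    exact squeeze_zero (fun n => mul_nonneg (hγ n) (sq_nonneg _)) hmain this
  · intro n
    calc γ n * ‖a n‖ ^ 2 ≤ G * R n := hmain n
      _ ≤ G * Xc := mul_le_mul_of_nonneg_left (hRle n) hG0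

theorem stmt1_aux (γ : ℕ → ℝ) (hmono : Monotone γ) (h0 : γ 0 = 0)
    (α : ℂ) (hα : ‖α‖ < 1) (a c d : ℕ → ℂ)
    (hc0 : c 0 = -α * a 0) (hc : ∀ n, c (n + 1) = a n - α * a (n + 1))
    (hd0 : d 0 = a 0) (hd : ∀ n, d (n + 1) = a (n + 1) - (starRingEnd ℂ) α * a n)
    (ha2 : Summable fun n => ‖a n‖ ^ 2)
    (hX : Summable fun n => γ n * ‖c n‖ ^ 2) :
    (Summable fun n => γ n * ‖d n‖ ^ 2) ∧
      (Summable fun n => (γ (n + 1) - γ n) * ‖a n‖ ^ 2) ∧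
      (∑' n, γ n * ‖d n‖ ^ 2) = (∑' n, γ n * ‖c n‖ ^ 2) -
        (1 - ‖α‖ ^ 2) * ∑' n, (γ (n + 1) - γ n) * ‖a n‖ ^ 2 := by
  have hγ : ∀ n, 0 ≤ γ n := fun n => h0 ▸ hmono (Nat.zero_le n)
  obtain ⟨htend, hUB⟩ := coeff_tendsto γ hmono h0 α hα a c hc ha2 hX
  set K : ℝ := 1 - ‖α‖ ^ 2 with hKdef
  have hK0 : 0 < K := by
    have : ‖α‖ ^ 2 < 1 := by nlinarith [norm_nonneg α]
    linarith
  set Xc : ℝ := ∑' n, γ n * ‖c n‖ ^ 2 with hXcdef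
  have hXc0 : 0 ≤ Xc := tsum_nonneg fun n => mul_nonneg (hγ n) (sq_nonneg _)
  set G : ℝ := (1 - ‖α‖)⁻¹ with hGdef
  have hG0 : 0 ≤ G := inv_nonneg.2 (by linarith [norm_nonneg α])
  have hd0' : ∀ n, 0 ≤ γ n * ‖d n‖ ^ 2 := fun n => mul_nonneg (hγ n) (sq_nonneg _)
  have hy0 : ∀ n, 0 ≤ (γ (n + 1) - γ n) * ‖a n‖ ^ 2 := fun n =>
    mul_nonneg (by linarith [hmono (Nat.le_succ n)]) (sq_nonneg _)
  -- partial sum identity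
  have hPS : ∀ N, ∑ n ∈ range (N+1), γ n * ‖d n‖ ^ 2 =
      (∑ n ∈ range (N+1), γ n * ‖c n‖ ^ 2) +
        K * (γ N * ‖a N‖ ^ 2 - ∑ n ∈ range N, (γ (n+1) - γ n) * ‖a n‖ ^ 2) := by
    intro N
    induction N with
    | zero => simp [h0]
    | succ N ih =>
      rw [Finset.sum_range_succ (fun n => γ n * ‖d n‖ ^ 2) (N+1),
        Finset.sum_range_succ (fun n => γ n * ‖c n‖ ^ 2) (N+1),
        Finset.sum_range_succ (fun n => (γ (n+1) - γ n) * ‖a n‖ ^ 2) N,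
        hd N, hc N, key_alg α (a (N+1)) (a N), ← hKdef, ih]
      ring
  have hScle : ∀ N, ∑ n ∈ range N, γ n * ‖c n‖ ^ 2 ≤ Xc :=
    fun N => Summable.sum_le_tsum (range N) (fun n _ => mul_nonneg (hγ n) (sq_nonneg _)) hX
  -- summability of y
  have hYsum : Summable fun n => (γ (n + 1) - γ n) * ‖a n‖ ^ 2 := by
    apply summable_of_sum_range_le hy0 (c := G * Xc + Xc / K)
    intro N
    have h1 := hPS N
    have h2 : 0 ≤ ∑ n ∈ range (N+1), γ n * ‖d n‖ ^ 2 :=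
      Finset.sum_nonneg fun n _ => hd0' n
    have h3 := hUB N
    have h4 := hScle (N+1)
    -- K * T N ≤ Sc + K * γ N ‖a N‖² - Sd
    have h5 : K * (∑ n ∈ range N, (γ (n+1) - γ n) * ‖a n‖ ^ 2) ≤ Xc + K * (G * Xc) := by
      nlinarith
    have h6 : (∑ n ∈ range N, (γ (n+1) - γ n) * ‖a n‖ ^ 2) ≤ (Xc + K * (G * Xc)) / K := by
      rw [le_div_iff₀ hK0]
      nlinarith
    have h7 : (Xc + K * (G * Xc)) / K = Xc / K + G * Xc := by
      field_simp
    linarith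
  -- summability of d
  have hT0 : ∀ N, 0 ≤ ∑ n ∈ range N, (γ (n+1) - γ n) * ‖a n‖ ^ 2 :=
    fun N => Finset.sum_nonneg fun n _ => hy0 n
  have hDsum : Summable fun n => γ n * ‖d n‖ ^ 2 := by
    apply summable_of_sum_range_le hd0' (c := Xc + K * (G * Xc))
    intro N
    have hsub : ∑ n ∈ range N, γ n * ‖d n‖ ^ 2 ≤ ∑ n ∈ range (N+1), γ n * ‖d n‖ ^ 2 := by
      apply Finset.sum_le_sum_of_subset_of_nonneg
      · exact Finset.range_subset_range.2 (Nat.le_succ N)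
      · exact fun i _ _ => hd0' i
    have h1 := hPS N
    have h3 := hUB N
    have h4 := hScle (N+1)
    have h5 := hT0 N
    nlinarith
  refine ⟨hDsum, hYsum, ?_⟩
  -- limits
  set Y : ℝ := ∑' n, (γ (n + 1) - γ n) * ‖a n‖ ^ 2 with hYdef
  have hDlim : Tendsto (fun N => ∑ n ∈ range (N+1), γ n * ‖d n‖ ^ 2) atTop
      (𝓝 (∑' n, γ n * ‖d n‖ ^ 2)) :=
    hDsum.hasSum.tendsto_sum_nat.comp (tendsto_add_atTop_nat 1)
  have hClim : Tendsto (fun N => ∑ n ∈ range (N+1), γ n * ‖c n‖ ^ 2) atTop (𝓝 Xc) :=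
    hX.hasSum.tendsto_sum_nat.comp (tendsto_add_atTop_nat 1)
  have hTlim : Tendsto (fun N => ∑ n ∈ range N, (γ (n+1) - γ n) * ‖a n‖ ^ 2) atTop (𝓝 Y) :=
    hYsum.hasSum.tendsto_sum_nat
  have hRHS : Tendsto (fun N => (∑ n ∈ range (N+1), γ n * ‖c n‖ ^ 2) +
      K * (γ N * ‖a N‖ ^ 2 - ∑ n ∈ range N, (γ (n+1) - γ n) * ‖a n‖ ^ 2)) atTop
      (𝓝 (Xc + K * (0 - Y))) :=
    hClim.add ((htend.sub hTlim).const_mul K)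
  have := tendsto_nhds_unique hDlim ((hRHS.congr (fun N => (hPS N).symm)))
  rw [this]
  ring



/-- Reflection of a root across the unit circle: if `F(z) = (z-α)H(z)` with Taylor
coefficients `c` for `F`, `a` for `H`, and `φ_α(F)(z) = (1-ᾱz)H(z)` with coefficients `d`,
and `F ∈ X_γ`, then `φ_α(F) ∈ X_γ`, `H ∈ Y_γ`, and
`‖φ_α(F)‖_{X_γ}² = ‖F‖_{X_γ}² - (1-|α|²)‖H‖_{Y_γ}²`. -/
theorem stmt1 (γ : ℕ → ℝ) (hmono : Monotone γ) (h0 : γ 0 = 0)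
    (α : ℂ) (hα : ‖α‖ < 1) (a c d : ℕ → ℂ)
    -- `c` are the coefficients of `F(z) = (z-α)H(z)` where `H` has coefficients `a`
    (hc0 : c 0 = -α * a 0) (hc : ∀ n, c (n + 1) = a n - α * a (n + 1))
    -- `d` are the coefficients of `φ_α(F)(z) = (1-ᾱz)H(z)`
    (hd0 : d 0 = a 0) (hd : ∀ n, d (n + 1) = a (n + 1) - (starRingEnd ℂ) α * a n)
    -- `H ∈ H²` (as follows from `F ∈ H²`)
    (ha2 : Summable fun n => ‖a n‖ ^ 2)
    -- `F ∈ X_γ`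
    (hX : Summable fun n => γ n * ‖c n‖ ^ 2) :
    (Summable fun n => γ n * ‖d n‖ ^ 2) ∧
      (Summable fun n => (γ (n + 1) - γ n) * ‖a n‖ ^ 2) ∧
      xnorm2 γ d = xnorm2 γ c - (1 - ‖α‖ ^ 2) * ynorm2 γ a := by
  have h := stmt1_aux γ hmono h0 α hα a c d hc0 hc hd0 hd ha2 hX
  exact ⟨h.1, h.2.1, by unfold xnorm2 ynorm2; exact h.2.2⟩
end

section
/- Let (γ_n) be monotone increasing with γ_0=0. If F ∈ X_γ has exactly one root α in the open unit disc D, with Blaschke decomposition F(z) = ((z−α)/(1−ᾱz))·G(z) where G has no zeros in D, then ‖G‖_{X_γ}^2 = ‖F‖_{X_γ}^2 − (1−|α|^2)·‖G(z)/(1−ᾱz)‖_{Y_γ}^2. -/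
open Filter Finset

lemma isCoeffs_hasFPowerSeriesAt {a : ℕ → ℂ} {F : ℂ → ℂ} (ha : IsCoeffs a F) :
    HasFPowerSeriesAt F (FormalMultilinearSeries.ofScalars ℂ a) 0 := by
  refine ⟨1, ⟨?_, one_pos, fun {y} hy => ?_⟩⟩
  · apply ENNReal.le_of_forall_nnreal_lt
    intro r hr
    have hr1 : (r : ℝ) < 1 := by exact_mod_cast hr
    have hsum : Summable (fun n => a n * (r : ℂ) ^ n) := by
      refine (ha (r : ℂ) ?_).summable
      simpa using hr1
    have htend : Tendsto (fun n => ‖a n * (r : ℂ) ^ n‖) atTop (nhds 0) := by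
      simpa using hsum.tendsto_atTop_zero.norm
    obtain ⟨C, hC⟩ := htend.bddAbove_range
    refine FormalMultilinearSeries.le_radius_of_bound _ C fun n => ?_
    have : ‖FormalMultilinearSeries.ofScalars ℂ a n‖ * (r : ℝ) ^ n = ‖a n * (r : ℂ) ^ n‖ := by
      rw [FormalMultilinearSeries.ofScalars_norm, norm_mul, norm_pow]
      simp
    rw [this]
    exact hC (Set.mem_range_self n)
  · have hy' : ‖y‖ < 1 := by
      simpa [edist_zero_right, ← ENNReal.coe_one, ENNReal.coe_lt_coe,
        ← NNReal.coe_lt_coe] using hy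
    have := ha y hy'
    have hco : ∀ n : ℕ, (FormalMultilinearSeries.ofScalars ℂ a).coeff n = a n := by
      intro n
      have h1 := FormalMultilinearSeries.ofScalars_apply_eq (E := ℂ) a (1 : ℂ) n
      simp only [smul_eq_mul, mul_one, one_pow] at h1
      exact h1
    simp only [FormalMultilinearSeries.apply_eq_pow_smul_coeff, smul_eq_mul, zero_add, hco]
    exact this.congr_fun fun n => by ring

lemma isCoeffs_unique {a b : ℕ → ℂ} {F : ℂ → ℂ} (ha : IsCoeffs a F) (hb : IsCoeffs b F) :
    a = b :=
  FormalMultilinearSeries.ofScalars_series_injective ℂ ℂ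
    ((isCoeffs_hasFPowerSeriesAt ha).eq_formalMultilinearSeries (isCoeffs_hasFPowerSeriesAt hb))

def shiftc (c : ℕ → ℂ) : ℕ → ℂ := fun n => Nat.casesOn n 0 c

lemma hasSum_shiftc {c : ℕ → ℂ} {z S : ℂ} (h : HasSum (fun n => c n * z ^ (n + 1)) S) :
    HasSum (fun n => shiftc c n * z ^ n) S := by
  have h0 : HasSum (fun n => shiftc c (n + 1) * z ^ (n + 1)) S := h
  rw [hasSum_nat_add_iff (f := fun n => shiftc c n * z ^ n) 1] at h0
  simpa [shiftc] using h0

lemma alg (α a b : ℂ) :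
    ‖b - (starRingEnd ℂ) α * a‖ ^ 2 - ‖a - α * b‖ ^ 2 = (1 - ‖α‖ ^ 2) * (‖b‖ ^ 2 - ‖a‖ ^ 2) := by
  simp only [Complex.sq_norm, Complex.normSq_apply, Complex.sub_re,
    Complex.sub_im, Complex.mul_re, Complex.mul_im, Complex.conj_re, Complex.conj_im,
    Complex.one_re, Complex.one_im]
  ring

/-- Single-root Blaschke decomposition: if `F ∈ X_γ` has a single root `α` in `𝔻`,
with `F = ((z-α)/(1-ᾱz))·G`, `G` zero-free in `𝔻`, then
`‖G‖_{X_γ}² = ‖F‖_{X_γ}² - (1-|α|²)‖G/(1-ᾱ·)‖_{Y_γ}²`. -/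
theorem stmt2 (γ : ℕ → ℝ) (hmono : Monotone γ) (h0 : γ 0 = 0)
    (F G : ℂ → ℂ) (f g k : ℕ → ℂ) (α : ℂ) (hα : ‖α‖ < 1)
    (hf : IsCoeffs f F) (hg : IsCoeffs g G)
    (hk : ∀ z : ℂ, ‖z‖ < 1 →
      HasSum (fun n => k n * z ^ n) (G z / (1 - (starRingEnd ℂ) α * z)))
    (hG0 : ∀ z : ℂ, ‖z‖ < 1 → G z ≠ 0)
    (hfac : ∀ z : ℂ, ‖z‖ < 1 →
      F z = (z - α) / (1 - (starRingEnd ℂ) α * z) * G z)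
    (hH2 : Summable fun n => ‖f n‖ ^ 2)
    (hX : Summable fun n => γ n * ‖f n‖ ^ 2) :
    (Summable fun n => γ n * ‖g n‖ ^ 2) ∧
      (Summable fun n => (γ (n + 1) - γ n) * ‖k n‖ ^ 2) ∧
      xnorm2 γ g = xnorm2 γ f - (1 - ‖α‖ ^ 2) * ynorm2 γ k := by
  have hγ0 : ∀ n, 0 ≤ γ n := fun n => h0 ▸ hmono (Nat.zero_le n)
  have hα0 := norm_nonneg α
  -- nonvanishing of the denominator
  have hne : ∀ z : ℂ, ‖z‖ < 1 → (1 : ℂ) - (starRingEnd ℂ) α * z ≠ 0 := by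
    intro z hz h
    rw [sub_eq_zero] at h
    have h1 : ‖(starRingEnd ℂ) α * z‖ < 1 := by
      rw [norm_mul, RCLike.norm_conj]
      calc ‖α‖ * ‖z‖ ≤ 1 * ‖z‖ := by
            exact mul_le_mul_of_nonneg_right hα.le (norm_nonneg z)
        _ < 1 := by simpa using hz
    rw [← h] at h1
    simp at h1
  -- coefficient relation for g
  have hgk : ∀ n, g (n + 1) = k (n + 1) - (starRingEnd ℂ) α * k n := by
    have hg' : IsCoeffs (fun n => k n - shiftc (fun m => (starRingEnd ℂ) α * k m) n) G := by
      intro z hz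
      have hKz := hk z hz
      have h1 : HasSum (fun n => ((starRingEnd ℂ) α * k n) * z ^ (n + 1))
          ((starRingEnd ℂ) α * z * (G z / (1 - (starRingEnd ℂ) α * z))) := by
        have := hKz.mul_left ((starRingEnd ℂ) α * z)
        exact this.congr_fun fun n => by ring
      have h3 := hKz.sub (hasSum_shiftc h1)
      have hval : G z / (1 - (starRingEnd ℂ) α * z)
          - (starRingEnd ℂ) α * z * (G z / (1 - (starRingEnd ℂ) α * z)) = G z := by
        field_simp [hne z hz]
      rw [hval] at h3
      exact h3.congr_fun fun n => by ring
    have := isCoeffs_unique hg hg'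
    intro n
    rw [congrFun this (n + 1)]
    simp [shiftc]
  -- coefficient relation for f
  have hfk : ∀ n, f (n + 1) = k n - α * k (n + 1) := by
    have hf' : IsCoeffs (fun n => shiftc k n - α * k n) F := by
      intro z hz
      have hKz := hk z hz
      have h1 : HasSum (fun n => k n * z ^ (n + 1))
          (z * (G z / (1 - (starRingEnd ℂ) α * z))) := by
        have := hKz.mul_left z
        exact this.congr_fun fun n => by ring
      have h3 := (hasSum_shiftc h1).sub (hKz.mul_left α)
      have hval : z * (G z / (1 - (starRingEnd ℂ) α * z))
          - α * (G z / (1 - (starRingEnd ℂ) α * z)) = F z := by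
        rw [hfac z hz]
        field_simp [hne z hz]
      rw [hval] at h3
      exact h3.congr_fun fun n => by ring
    have := isCoeffs_unique hf hf'
    intro n
    rw [congrFun this (n + 1)]
    simp [shiftc]
  -- growth bound on k
  set r : ℝ := (‖α‖ + 1) / 2 with hrdef
  have hr0 : 0 < r := by positivity
  have hrα : ‖α‖ < r := by rw [hrdef]; linarith
  have hr1 : r < 1 := by rw [hrdef]; linarith
  obtain ⟨C, hC⟩ : ∃ C, ∀ n, ‖k n‖ * r ^ n ≤ C := by
    have hs : Summable (fun n => k n * (r : ℂ) ^ n) := by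
      refine (hk (r : ℂ) ?_).summable
      simpa [abs_of_pos hr0] using hr1
    have ht : Filter.Tendsto (fun n => ‖k n‖ * r ^ n) Filter.atTop (nhds 0) := by
      have := hs.tendsto_atTop_zero.norm
      simp only [norm_zero] at this
      refine this.congr fun n => ?_
      rw [norm_mul, norm_pow, Complex.norm_real, Real.norm_eq_abs, abs_of_pos hr0]
    obtain ⟨C, hC⟩ := ht.bddAbove_range
    exact ⟨C, fun n => hC (Set.mem_range_self n)⟩
  -- bound on f
  obtain ⟨Mf, hMf⟩ : ∃ Mf, ∀ n, ‖f n‖ ≤ Mf := by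
    have ht : Filter.Tendsto (fun n => ‖f n‖) Filter.atTop (nhds 0) := by
      have := hH2.tendsto_atTop_zero.sqrt
      simpa [Real.sqrt_sq (norm_nonneg _)] using this
    obtain ⟨Mf, hMf⟩ := ht.bddAbove_range
    exact ⟨Mf, fun n => hMf (Set.mem_range_self n)⟩
  -- k n as a tail series of f
  have hnormsum : ∀ n, Summable (fun i => ‖α ^ i * f (n + 1 + i)‖) := by
    intro n
    refine Summable.of_nonneg_of_le (fun i => norm_nonneg _) (fun i => ?_)
      ((summable_geometric_of_lt_one hα0 hα).mul_right Mf)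
    rw [norm_mul, norm_pow]
    exact mul_le_mul_of_nonneg_left (hMf _) (by positivity)
  have hksum : ∀ n, HasSum (fun i => α ^ i * f (n + 1 + i)) (k n) := by
    intro n
    have hpart : ∀ m, k n = (∑ i ∈ Finset.range m, α ^ i * f (n + 1 + i)) + α ^ m * k (n + m) := by
      intro m
      induction m with
      | zero => simp
      | succ m ih =>
        rw [ih, Finset.sum_range_succ]
        have hrec : k (n + m) = f (n + m + 1) + α * k (n + m + 1) := by
          rw [hfk (n + m)]; ring
        rw [hrec]
        have e1 : n + 1 + m = n + m + 1 := by omega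
        have e2 : n + (m + 1) = n + m + 1 := by omega
        rw [e1, e2, pow_succ]
        ring
    have hs : Summable (fun i => α ^ i * f (n + 1 + i)) := (hnormsum n).of_norm
    have htend : Filter.Tendsto (fun m => ∑ i ∈ Finset.range m, α ^ i * f (n + 1 + i))
        Filter.atTop (nhds (k n)) := by
      have h2 : Filter.Tendsto (fun m => α ^ m * k (n + m)) Filter.atTop (nhds 0) := by
        apply squeeze_zero_norm (a := fun m => (C / r ^ n) * (‖α‖ / r) ^ m)
        · intro m
          rw [norm_mul, norm_pow]
          have hkb : ‖k (n + m)‖ ≤ C / r ^ (n + m) := by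
            rw [le_div_iff₀ (by positivity)]
            exact hC (n + m)
          calc ‖α‖ ^ m * ‖k (n + m)‖ ≤ ‖α‖ ^ m * (C / r ^ (n + m)) := by
                exact mul_le_mul_of_nonneg_left hkb (by positivity)
            _ = (C / r ^ n) * (‖α‖ / r) ^ m := by
                rw [pow_add, div_pow]
                ring
        · have : Filter.Tendsto (fun m : ℕ => (‖α‖ / r) ^ m) Filter.atTop (nhds 0) := by
            apply tendsto_pow_atTop_nhds_zero_of_lt_one (by positivity)
            rw [div_lt_one hr0]; exact hrα
          simpa using this.const_mul (C / r ^ n)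
      have h3 : Filter.Tendsto
          (fun m => k n - α ^ m * k (n + m)) Filter.atTop (nhds (k n - 0)) :=
        tendsto_const_nhds.sub h2
      rw [sub_zero] at h3
      refine h3.congr fun m => ?_
      rw [hpart m]; ring
    have := hs.hasSum.tendsto_sum_nat
    have huniq := tendsto_nhds_unique this htend
    rw [← huniq]
    exact hs.hasSum
  -- the weighted tail bound : γ n * ‖k n‖² → 0
  have hu : Filter.Tendsto (fun j => Real.sqrt (γ j) * ‖f j‖) Filter.atTop (nhds 0) := by
    have := hX.tendsto_atTop_zero.sqrt
    simp only [Real.sqrt_zero] at this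
    refine this.congr fun j => ?_
    rw [Real.sqrt_mul (hγ0 j), Real.sqrt_sq (norm_nonneg _)]
  obtain ⟨Mu, hMu⟩ : ∃ Mu, ∀ n, Real.sqrt (γ n) * ‖f n‖ ≤ Mu := by
    obtain ⟨Mu, hMu⟩ := hu.bddAbove_range
    exact ⟨Mu, fun n => hMu (Set.mem_range_self n)⟩
  have hE : Filter.Tendsto (fun n => γ n * ‖k n‖ ^ 2) Filter.atTop (nhds 0) := by
    have hv : Filter.Tendsto (fun n => Real.sqrt (γ n) * ‖k n‖) Filter.atTop (nhds 0) := by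
      rw [Metric.tendsto_atTop]
      intro ε hε
      have hδ : 0 < ε / 2 * (1 - ‖α‖) := by
        have : 0 < 1 - ‖α‖ := by linarith
        positivity
      obtain ⟨J, hJ⟩ := (Metric.tendsto_atTop.mp hu) (ε / 2 * (1 - ‖α‖)) hδ
      refine ⟨J, fun n hn => ?_⟩
      have husum : Summable (fun i : ℕ => ‖α‖ ^ i * (Real.sqrt (γ (n + 1 + i)) * ‖f (n + 1 + i)‖)) := by
        refine Summable.of_nonneg_of_le (fun i => by positivity) (fun i => ?_)
          ((summable_geometric_of_lt_one hα0 hα).mul_right Mu)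
        exact mul_le_mul_of_nonneg_left (hMu _) (by positivity)
      have step1 : Real.sqrt (γ n) * ‖k n‖ ≤
          ∑' i, ‖α‖ ^ i * (Real.sqrt (γ (n + 1 + i)) * ‖f (n + 1 + i)‖) := by
        have hkn : ‖k n‖ ≤ ∑' i, ‖α ^ i * f (n + 1 + i)‖ := by
          rw [← (hksum n).tsum_eq]
          exact norm_tsum_le_tsum_norm (hnormsum n)
        calc Real.sqrt (γ n) * ‖k n‖
            ≤ Real.sqrt (γ n) * ∑' i, ‖α ^ i * f (n + 1 + i)‖ := by
              exact mul_le_mul_of_nonneg_left hkn (Real.sqrt_nonneg _)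
          _ = ∑' i, Real.sqrt (γ n) * ‖α ^ i * f (n + 1 + i)‖ := by
              rw [← tsum_mul_left]
          _ ≤ ∑' i, ‖α‖ ^ i * (Real.sqrt (γ (n + 1 + i)) * ‖f (n + 1 + i)‖) := by
              refine Summable.tsum_le_tsum (fun i => ?_) ((hnormsum n).mul_left _) husum
              rw [norm_mul, norm_pow]
              have hmon : Real.sqrt (γ n) ≤ Real.sqrt (γ (n + 1 + i)) :=
                Real.sqrt_le_sqrt (hmono (by omega))
              calc Real.sqrt (γ n) * (‖α‖ ^ i * ‖f (n + 1 + i)‖)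
                  ≤ Real.sqrt (γ (n + 1 + i)) * (‖α‖ ^ i * ‖f (n + 1 + i)‖) := by
                    exact mul_le_mul_of_nonneg_right hmon (by positivity)
                _ = ‖α‖ ^ i * (Real.sqrt (γ (n + 1 + i)) * ‖f (n + 1 + i)‖) := by ring
      have step2 : ∑' i, ‖α‖ ^ i * (Real.sqrt (γ (n + 1 + i)) * ‖f (n + 1 + i)‖)
          ≤ ε / 2 := by
        have hbd : ∀ i : ℕ, ‖α‖ ^ i * (Real.sqrt (γ (n + 1 + i)) * ‖f (n + 1 + i)‖)
            ≤ ‖α‖ ^ i * (ε / 2 * (1 - ‖α‖)) := by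
          intro i
          refine mul_le_mul_of_nonneg_left ?_ (by positivity)
          have := hJ (n + 1 + i) (by omega)
          rw [Real.dist_eq, sub_zero] at this
          calc Real.sqrt (γ (n + 1 + i)) * ‖f (n + 1 + i)‖
              ≤ |Real.sqrt (γ (n + 1 + i)) * ‖f (n + 1 + i)‖| := le_abs_self _
            _ ≤ ε / 2 * (1 - ‖α‖) := this.le
        calc ∑' i, ‖α‖ ^ i * (Real.sqrt (γ (n + 1 + i)) * ‖f (n + 1 + i)‖)
            ≤ ∑' i : ℕ, ‖α‖ ^ i * (ε / 2 * (1 - ‖α‖)) :=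
              Summable.tsum_le_tsum hbd husum ((summable_geometric_of_lt_one hα0 hα).mul_right _)
          _ = (1 - ‖α‖)⁻¹ * (ε / 2 * (1 - ‖α‖)) := by
              rw [tsum_mul_right, tsum_geometric_of_lt_one hα0 hα]
          _ = ε / 2 := by
              have h1α : (1:ℝ) - ‖α‖ ≠ 0 := by
                intro h
                rw [sub_eq_zero] at h
                linarith
              rw [mul_comm (ε / 2) (1 - ‖α‖), ← mul_assoc, inv_mul_cancel₀ h1α, one_mul]
      have hvn : 0 ≤ Real.sqrt (γ n) * ‖k n‖ := by positivity
      rw [Real.dist_eq, sub_zero, abs_of_nonneg hvn]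
      calc Real.sqrt (γ n) * ‖k n‖ ≤ ε / 2 := le_trans step1 step2
        _ < ε := by linarith
    have := hv.mul hv
    simp only [mul_zero] at this
    refine this.congr fun n => ?_
    rw [show Real.sqrt (γ n) * ‖k n‖ * (Real.sqrt (γ n) * ‖k n‖)
        = (Real.sqrt (γ n) * Real.sqrt (γ n)) * (‖k n‖ * ‖k n‖) by ring,
      Real.mul_self_sqrt (hγ0 n)]
    ring
  -- the key partial-sum identity
  have key : ∀ N : ℕ,
      (∑ n ∈ Finset.range (N + 1), γ n * ‖g n‖ ^ 2)
        + (1 - ‖α‖ ^ 2) * (∑ n ∈ Finset.range N, (γ (n + 1) - γ n) * ‖k n‖ ^ 2)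
      = (∑ n ∈ Finset.range (N + 1), γ n * ‖f n‖ ^ 2)
        + (1 - ‖α‖ ^ 2) * (γ N * ‖k N‖ ^ 2) := by
    intro N
    induction N with
    | zero => simp [h0]
    | succ N ih =>
      rw [Finset.sum_range_succ (n := N + 1), Finset.sum_range_succ (n := N + 1),
        Finset.sum_range_succ (f := fun n => (γ (n + 1) - γ n) * ‖k n‖ ^ 2)]
      rw [hgk N, hfk N]
      linear_combination ih + γ (N + 1) * alg α (k N) (k (N + 1))
  -- limit bookkeeping
  set c := 1 - ‖α‖ ^ 2 with hcdef
  have hc0 : 0 < c := by nlinarith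
  set xf := ∑' n, γ n * ‖f n‖ ^ 2 with hxf
  obtain ⟨CE, hCE⟩ : ∃ CE, ∀ n, γ n * ‖k n‖ ^ 2 ≤ CE := by
    obtain ⟨CE, hCE⟩ := hE.bddAbove_range
    exact ⟨CE, fun n => hCE (Set.mem_range_self n)⟩
  have hfterm : ∀ n, 0 ≤ γ n * ‖f n‖ ^ 2 := fun n => mul_nonneg (hγ0 n) (by positivity)
  have hgterm : ∀ n, 0 ≤ γ n * ‖g n‖ ^ 2 := fun n => mul_nonneg (hγ0 n) (by positivity)
  have hkterm : ∀ n, 0 ≤ (γ (n + 1) - γ n) * ‖k n‖ ^ 2 := fun n => by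
    have : γ n ≤ γ (n + 1) := hmono (by omega)
    have h1 : (0:ℝ) ≤ γ (n + 1) - γ n := by linarith
    exact mul_nonneg h1 (by positivity)
  have hBle : ∀ N, ∑ n ∈ Finset.range N, γ n * ‖f n‖ ^ 2 ≤ xf := fun N =>
    Summable.sum_le_tsum _ (fun i _ => hfterm i) hX
  have hsumk : Summable fun n => (γ (n + 1) - γ n) * ‖k n‖ ^ 2 := by
    apply summable_of_sum_range_le (c := (xf + c * CE) / c) hkterm
    intro N
    have hkey := key N
    have hA : 0 ≤ ∑ n ∈ Finset.range (N + 1), γ n * ‖g n‖ ^ 2 :=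
      Finset.sum_nonneg fun i _ => hgterm i
    have h1 : c * (∑ n ∈ Finset.range N, (γ (n + 1) - γ n) * ‖k n‖ ^ 2)
        ≤ xf + c * CE := by
      have h2 : c * (γ N * ‖k N‖ ^ 2) ≤ c * CE :=
        mul_le_mul_of_nonneg_left (hCE N) hc0.le
      have h3 := hBle (N + 1)
      linarith
    rw [le_div_iff₀ hc0]
    linarith
  set yk := ∑' n, (γ (n + 1) - γ n) * ‖k n‖ ^ 2 with hyk
  have hBtend : Filter.Tendsto (fun N => ∑ n ∈ Finset.range N, γ n * ‖f n‖ ^ 2)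
      Filter.atTop (nhds xf) := hX.hasSum.tendsto_sum_nat
  have hCtend : Filter.Tendsto (fun N => ∑ n ∈ Finset.range N, (γ (n + 1) - γ n) * ‖k n‖ ^ 2)
      Filter.atTop (nhds yk) := hsumk.hasSum.tendsto_sum_nat
  have hB1 : Filter.Tendsto (fun N => ∑ n ∈ Finset.range (N + 1), γ n * ‖f n‖ ^ 2)
      Filter.atTop (nhds xf) := (Filter.tendsto_add_atTop_iff_nat 1).mpr hBtend
  have hAtend : Filter.Tendsto (fun N => ∑ n ∈ Finset.range (N + 1), γ n * ‖g n‖ ^ 2)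
      Filter.atTop (nhds (xf - c * yk)) := by
    have hcomb := (hB1.add (hE.const_mul c)).sub (hCtend.const_mul c)
    simp only [mul_zero, add_zero] at hcomb
    refine hcomb.congr fun N => ?_
    have := key N
    linarith
  have hAtend' : Filter.Tendsto (fun N => ∑ n ∈ Finset.range N, γ n * ‖g n‖ ^ 2)
      Filter.atTop (nhds (xf - c * yk)) := (Filter.tendsto_add_atTop_iff_nat 1).mp hAtend
  have hAmono : Monotone (fun N => ∑ n ∈ Finset.range N, γ n * ‖g n‖ ^ 2) := by
    intro a b hab
    exact Finset.sum_le_sum_of_subset_of_nonneg (Finset.range_subset_range.mpr hab)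
      (fun i _ _ => hgterm i)
  have hsumg : Summable fun n => γ n * ‖g n‖ ^ 2 := by
    apply summable_of_sum_range_le (c := xf - c * yk) hgterm
    intro N
    exact hAmono.ge_of_tendsto hAtend' N
  refine ⟨hsumg, hsumk, ?_⟩
  rw [xnorm2, xnorm2, ynorm2]
  exact tendsto_nhds_unique hsumg.hasSum.tendsto_sum_nat hAtend'
end
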